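/- The distribution of any exchangeable joint mix with center μ is a mixture of distributions U_a, where a ∈ ℝⁿ with ∑_i a_i = μ and U_a is the uniform distribution over the n! permutations of a; each U_a is the law of an exchangeable negatively associated joint mix with center μ. -/

import Mathlib

open MeasureTheory ProbabilityTheory

instance permMeasurableSpace (n : ℕ) : MeasurableSpace (Equiv.Perm (Fin n)) := ⊤

/-- The uniform probability measure on permutations of `[n]`. -/
noncomputable def permMeasure (n : ℕ) : Measure (Equiv.Perm (Fin n)) :=
  haveI : Nonempty (Equiv.Perm (Fin n)) := ⟨1⟩
  (PMF.uniformOfFintype (Equiv.Perm (Fin n))).toMeasure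

/-- `U_a`: the uniform distribution over the `n!` permutations of the vector `a`. -/
noncomputable def Ua (n : ℕ) (a : Fin n → ℝ) : Measure (Fin n → ℝ) :=
  Measure.map (fun π : Equiv.Perm (Fin n) => fun i => a (π i)) (permMeasure n)

/-- Negative association of a law `ν` on `ℝⁿ`: any two monotone functions depending on
disjoint coordinate blocks are nonpositively correlated. -/
def NAMeasure {n : ℕ} (ν : Measure (Fin n → ℝ)) : Prop :=
  ∀ A B : Finset (Fin n), Disjoint A B →
    ∀ f g : (Fin n → ℝ) → ℝ, Measurable f → Measurable g → Monotone f → Monotone g →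
      (∀ x y, (∀ i ∈ A, x i = y i) → f x = f y) →
      (∀ x y, (∀ i ∈ B, x i = y i) → g x = g y) →
      MemLp f 2 ν → MemLp g 2 ν →
      ∫ x, f x * g x ∂ν - (∫ x, f x ∂ν) * (∫ x, g x ∂ν) ≤ 0

open scoped ENNReal

section Key

open Finset

variable {ι : Type} [Fintype ι] [DecidableEq ι]

private lemma swap_term_le (a : ι → ℝ) (i₀ : ι) (hmax : ∀ i, a i ≤ a i₀)
    {A : Finset ι} {f : (ι → ℝ) → ℝ} (hf : Monotone f)
    (hfA : ∀ x y, (∀ i ∈ A, x i = y i) → f x = f y)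
    {j j' : ι} (hj' : j' ∉ A) {σ : Equiv.Perm ι} (hσ : σ j' = i₀) :
    f (fun i => a (σ i)) ≤ f (fun i => a (σ (Equiv.swap j j' i))) := by
  have h1 : f (fun i => a (σ (Equiv.swap j j' i)))
      = f (Function.update (fun i => a (σ i)) j (a i₀)) := by
    apply hfA
    intro i hi
    have hij' : i ≠ j' := fun h => hj' (h ▸ hi)
    by_cases hij : i = j
    · subst hij
      simp [Equiv.swap_apply_left, hσ]
    · rw [Equiv.swap_apply_of_ne_of_ne hij hij', Function.update_of_ne hij]
  rw [h1]
  apply hf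
  intro i
  by_cases hij : i = j
  · subst hij; simp [hmax]
  · rw [Function.update_of_ne hij]

private lemma fiber_sum_le (a : ι → ℝ) (i₀ : ι) (hmax : ∀ i, a i ≤ a i₀)
    {A : Finset ι} {f : (ι → ℝ) → ℝ} (hf : Monotone f)
    (hfA : ∀ x y, (∀ i ∈ A, x i = y i) → f x = f y)
    (j : ι) {j' : ι} (hj' : j' ∉ A) :
    ∑ σ ∈ univ.filter (fun σ : Equiv.Perm ι => σ j' = i₀), f (fun i => a (σ i))
      ≤ ∑ σ ∈ univ.filter (fun σ : Equiv.Perm ι => σ j = i₀), f (fun i => a (σ i)) := by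
  have key : ∑ σ ∈ univ.filter (fun σ : Equiv.Perm ι => σ j = i₀), f (fun i => a (σ i))
      = ∑ σ ∈ univ.filter (fun σ : Equiv.Perm ι => σ j' = i₀),
          f (fun i => a (σ (Equiv.swap j j' i))) := by
    apply Finset.sum_bij' (i := fun (σ : Equiv.Perm ι) (_ : σ ∈ univ.filter (fun σ : Equiv.Perm ι => σ j = i₀)) => (Equiv.swap j j').trans σ)
      (j := fun (σ : Equiv.Perm ι) (_ : σ ∈ univ.filter (fun σ : Equiv.Perm ι => σ j' = i₀)) => (Equiv.swap j j').trans σ)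
    · intro σ hσ
      simp only [mem_filter, mem_univ, true_and] at hσ ⊢
      simp [Equiv.swap_apply_right, hσ]
    · intro σ hσ
      simp only [mem_filter, mem_univ, true_and] at hσ ⊢
      simp [Equiv.swap_apply_left, hσ]
    · intro σ _; ext i; simp
    · intro σ _; ext i; simp
    · intro σ hσ
      congr 1
      funext i
      simp
  rw [key]
  apply Finset.sum_le_sum
  intro σ hσ
  simp only [mem_filter, mem_univ, true_and] at hσ
  exact swap_term_le a i₀ hmax hf hfA hj' hσ

private lemma fiber_sum_eq (i₀ j : ι) (k : Equiv.Perm ι → ℝ) :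
    ∑ σ ∈ univ.filter (fun σ : Equiv.Perm ι => σ j = i₀), k σ
      = ∑ τ : Equiv.Perm {i : ι // i ≠ i₀},
          k ((Equiv.swap j i₀).trans (Equiv.Perm.ofSubtype τ)) := by
  symm
  have hmem : ∀ (σ : Equiv.Perm ι), σ ∈ univ.filter (fun σ : Equiv.Perm ι => σ j = i₀) →
      ∀ x : ι, x ≠ i₀ ↔ ((Equiv.swap j i₀).symm.trans σ) x ≠ i₀ := by
    intro σ hσ x
    simp only [mem_filter, mem_univ, true_and] at hσ
    have h0 : ((Equiv.swap j i₀).symm.trans σ) i₀ = i₀ := by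
      simp [Equiv.symm_swap, Equiv.swap_apply_right, hσ]
    constructor
    · intro hx hc
      exact hx (((Equiv.swap j i₀).symm.trans σ).injective (hc.trans h0.symm))
    · intro hx hc
      exact hx (by rw [hc, h0])
  refine Finset.sum_bij'
    (i := fun (τ : Equiv.Perm {i : ι // i ≠ i₀}) (_ : τ ∈ univ) =>
      (Equiv.swap j i₀).trans (Equiv.Perm.ofSubtype τ))
    (j := fun (σ : Equiv.Perm ι) (hσ : σ ∈ univ.filter (fun σ : Equiv.Perm ι => σ j = i₀)) =>
      Equiv.Perm.subtypePerm ((Equiv.swap j i₀).symm.trans σ) (fun x => (hmem σ hσ x).symm))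
    ?_ ?_ ?_ ?_ ?_
  · intro τ _
    simp only [mem_filter, mem_univ, true_and, Equiv.trans_apply, Equiv.swap_apply_left]
    exact Equiv.Perm.ofSubtype_apply_of_not_mem τ (not_not_intro rfl)
  · intro σ _; exact mem_univ _
  · intro τ _
    ext x
    cases' x with x hx
    simp only [Equiv.Perm.subtypePerm_apply]
    rw [Equiv.trans_apply, Equiv.trans_apply, Equiv.symm_swap, Equiv.swap_apply_self]
    exact Equiv.Perm.ofSubtype_apply_of_mem τ hx
  · intro σ hσ
    have h2 : ∀ x : ι, ((Equiv.swap j i₀).symm.trans σ) x ≠ x → x ≠ i₀ := by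
      intro x hx hc
      subst hc
      simp only [mem_filter, mem_univ, true_and] at hσ
      exact hx (by simp [Equiv.symm_swap, Equiv.swap_apply_right, hσ])
    rw [Equiv.Perm.ofSubtype_subtypePerm _ h2]
    ext i
    simp
  · intro τ _; rfl

private lemma key_of_const {ι : Type} [Fintype ι] [DecidableEq ι] (a : ι → ℝ)
    (f g : (ι → ℝ) → ℝ) (hconst : (∀ x y, f x = f y) ∨ (∀ x y, g x = g y)) :
    (Fintype.card (Equiv.Perm ι) : ℝ)
        * ∑ σ : Equiv.Perm ι, f (fun i => a (σ i)) * g (fun i => a (σ i))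
      ≤ (∑ σ : Equiv.Perm ι, f (fun i => a (σ i)))
        * ∑ σ : Equiv.Perm ι, g (fun i => a (σ i)) := by
  rcases hconst with h | h
  · set c := f (fun _ => 0) with hc
    have h1 : ∀ σ : Equiv.Perm ι, f (fun i => a (σ i)) = c := fun σ => h _ _
    have h2 : ∑ σ : Equiv.Perm ι, f (fun i => a (σ i)) * g (fun i => a (σ i))
        = c * ∑ σ : Equiv.Perm ι, g (fun i => a (σ i)) := by
      rw [Finset.mul_sum]
      exact Finset.sum_congr rfl fun σ _ => by rw [h1 σ]
    have h3 : ∑ σ : Equiv.Perm ι, f (fun i => a (σ i))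
        = (Fintype.card (Equiv.Perm ι) : ℝ) * c := by
      rw [Finset.sum_congr rfl fun σ _ => h1 σ, Finset.sum_const, Finset.card_univ,
        nsmul_eq_mul]
    rw [h2, h3]; ring_nf; exact le_refl _
  · set c := g (fun _ => 0) with hc
    have h1 : ∀ σ : Equiv.Perm ι, g (fun i => a (σ i)) = c := fun σ => h _ _
    have h2 : ∑ σ : Equiv.Perm ι, f (fun i => a (σ i)) * g (fun i => a (σ i))
        = (∑ σ : Equiv.Perm ι, f (fun i => a (σ i))) * c := by
      rw [Finset.sum_mul]
      exact Finset.sum_congr rfl fun σ _ => by rw [h1 σ]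
    have h3 : ∑ σ : Equiv.Perm ι, g (fun i => a (σ i))
        = (Fintype.card (Equiv.Perm ι) : ℝ) * c := by
      rw [Finset.sum_congr rfl fun σ _ => h1 σ, Finset.sum_const, Finset.card_univ,
        nsmul_eq_mul]
    rw [h2, h3]; ring_nf; exact le_refl _

private lemma perm_partition {ι : Type} [Fintype ι] [DecidableEq ι] (i₀ : ι)
    (k : Equiv.Perm ι → ℝ) :
    ∑ σ : Equiv.Perm ι, k σ
      = ∑ j : ι, ∑ σ ∈ univ.filter (fun σ : Equiv.Perm ι => σ j = i₀), k σ := by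
  rw [← Finset.sum_fiberwise_of_maps_to (g := fun σ : Equiv.Perm ι => σ.symm i₀)
    (fun σ _ => Finset.mem_univ _) k]
  refine Finset.sum_congr rfl fun j _ => ?_
  refine Finset.sum_congr ?_ fun _ _ => rfl
  ext σ
  simp only [mem_filter, mem_univ, true_and]
  rw [Equiv.symm_apply_eq, eq_comm]

private lemma key_ineq : ∀ (N : ℕ) (ι : Type) [Fintype ι] [DecidableEq ι],
    Fintype.card ι ≤ N →
    ∀ (a : ι → ℝ) (A B : Finset ι), Disjoint A B →
    ∀ f g : (ι → ℝ) → ℝ, Monotone f → Monotone g →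
    (∀ x y, (∀ i ∈ A, x i = y i) → f x = f y) →
    (∀ x y, (∀ i ∈ B, x i = y i) → g x = g y) →
    (Fintype.card (Equiv.Perm ι) : ℝ)
        * ∑ σ : Equiv.Perm ι, f (fun i => a (σ i)) * g (fun i => a (σ i))
      ≤ (∑ σ : Equiv.Perm ι, f (fun i => a (σ i)))
        * ∑ σ : Equiv.Perm ι, g (fun i => a (σ i)) := by
  intro N
  induction N with
  | zero =>
    intro ι _ _ hcard a A B hd f g hf hg hfA hgB
    have hempty : IsEmpty ι := Fintype.card_eq_zero_iff.mp (Nat.le_zero.mp hcard)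
    exact key_of_const a f g (Or.inr fun x y => hgB x y (fun i _ => (hempty.false i).elim))
  | succ N IH =>
    intro ι _ _ hcard a A B hd f g hf hg hfA hgB
    by_cases hB : B = ∅
    · exact key_of_const a f g (Or.inr fun x y => hgB x y (fun i hi => by simp [hB] at hi))
    by_cases hA : A = ∅
    · exact key_of_const a f g (Or.inl fun x y => hfA x y (fun i hi => by simp [hA] at hi))
    obtain ⟨jA, hjA⟩ := Finset.nonempty_iff_ne_empty.mpr hA
    obtain ⟨jB, hjB⟩ := Finset.nonempty_iff_ne_empty.mpr hB
    obtain ⟨i₀, -, hi₀⟩ := Finset.exists_max_image univ a ⟨jA, Finset.mem_univ _⟩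
    have hmax : ∀ i, a i ≤ a i₀ := fun i => hi₀ i (Finset.mem_univ i)
    set Tf : ι → ℝ := fun j =>
      ∑ σ ∈ univ.filter (fun σ : Equiv.Perm ι => σ j = i₀), f (fun i => a (σ i)) with hTf
    set Tg : ι → ℝ := fun j =>
      ∑ σ ∈ univ.filter (fun σ : Equiv.Perm ι => σ j = i₀), g (fun i => a (σ i)) with hTg
    set Tfg : ι → ℝ := fun j =>
      ∑ σ ∈ univ.filter (fun σ : Equiv.Perm ι => σ j = i₀),
        f (fun i => a (σ i)) * g (fun i => a (σ i)) with hTfg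
    set M : ℝ := (Fintype.card (Equiv.Perm {i : ι // i ≠ i₀}) : ℝ) with hM
    set nn : ℝ := (Fintype.card ι : ℝ) with hnn
    -- cardinality of the big perm group
    have hNM : (Fintype.card (Equiv.Perm ι) : ℝ) = nn * M := by
      have h1 := perm_partition (ι := ι) i₀ (fun _ => (1 : ℝ))
      simp only [Finset.sum_const, Finset.card_univ, nsmul_eq_mul, mul_one] at h1
      have h2 : ∀ j : ι, ((univ.filter (fun σ : Equiv.Perm ι => σ j = i₀)).card : ℝ) = M := by
        intro j
        have := fiber_sum_eq i₀ j (fun _ => (1 : ℝ))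
        simp only [Finset.sum_const, Finset.card_univ, nsmul_eq_mul, mul_one] at this
        exact this
      rw [h1, Finset.sum_congr rfl (fun j _ => h2 j), Finset.sum_const, Finset.card_univ,
        nsmul_eq_mul]
    -- the induction hypothesis transported to each fiber
    have hIH : ∀ j : ι, M * Tfg j ≤ Tf j * Tg j := by
      intro j
      set e := Equiv.swap j i₀ with he
      set a' : {i : ι // i ≠ i₀} → ℝ := fun s => a ↑s with ha'
      set F : ({i : ι // i ≠ i₀} → ℝ) → ℝ :=
        fun y => f (fun i => if h : e i = i₀ then a i₀ else y ⟨e i, h⟩) with hF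
      set G : ({i : ι // i ≠ i₀} → ℝ) → ℝ :=
        fun y => g (fun i => if h : e i = i₀ then a i₀ else y ⟨e i, h⟩) with hG
      set A' : Finset {i : ι // i ≠ i₀} := univ.filter (fun s => e.symm ↑s ∈ A) with hA'
      set B' : Finset {i : ι // i ≠ i₀} := univ.filter (fun s => e.symm ↑s ∈ B) with hB'
      have hcard' : Fintype.card {i : ι // i ≠ i₀} ≤ N := by
        have h1 : Fintype.card {i : ι // i ≠ i₀} = Fintype.card ι - 1 := by
          have := Fintype.card_subtype_compl (fun i : ι => i = i₀)
          simpa [Fintype.card_subtype_eq] using this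
        omega
      have hd' : Disjoint A' B' := by
        rw [Finset.disjoint_left]
        intro s hs1 hs2
        rw [hA', Finset.mem_filter] at hs1
        rw [hB', Finset.mem_filter] at hs2
        exact (Finset.disjoint_left.mp hd hs1.2) hs2.2
      have hmono : Monotone fun (y : {i : ι // i ≠ i₀} → ℝ) =>
          (fun i => if h : e i = i₀ then a i₀ else y ⟨e i, h⟩ : ι → ℝ) := by
        intro y y' hyy i
        by_cases h : e i = i₀
        · simp [h]
        · simp only [h, dite_false]
          exact hyy _
      have hFmono : Monotone F := fun y y' hyy => hf (hmono hyy)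
      have hGmono : Monotone G := fun y y' hyy => hg (hmono hyy)
      have hdep : ∀ (C : Finset ι) (C' : Finset {i : ι // i ≠ i₀}),
          C' = univ.filter (fun s : {i : ι // i ≠ i₀} => e.symm ↑s ∈ C) →
          ∀ y y' : {i : ι // i ≠ i₀} → ℝ, (∀ s ∈ C', y s = y' s) →
          ∀ i ∈ C, (fun i => if h : e i = i₀ then a i₀ else y ⟨e i, h⟩ : ι → ℝ) i
            = (fun i => if h : e i = i₀ then a i₀ else y' ⟨e i, h⟩ : ι → ℝ) i := by
        intro C C' hC' y y' hyy i hi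
        by_cases h : e i = i₀
        · simp [h]
        · simp only [h, dite_false]
          apply hyy
          rw [hC', Finset.mem_filter]
          exact ⟨Finset.mem_univ _, by simpa using hi⟩
      have hFA' : ∀ y y', (∀ s ∈ A', y s = y' s) → F y = F y' := by
        intro y y' hyy
        exact hfA _ _ (hdep A A' hA' y y' hyy)
      have hGB' : ∀ y y', (∀ s ∈ B', y s = y' s) → G y = G y' := by
        intro y y' hyy
        exact hgB _ _ (hdep B B' hB' y y' hyy)
      have h1 := IH {i : ι // i ≠ i₀} hcard' a' A' B' hd' F G hFmono hGmono hFA' hGB'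
      have hvec : ∀ τ : Equiv.Perm {i : ι // i ≠ i₀},
          (fun i => a ((e.trans (Equiv.Perm.ofSubtype τ)) i))
            = (fun i => if h : e i = i₀ then a i₀ else (fun s => a' (τ s)) ⟨e i, h⟩ : ι → ℝ) := by
        intro τ
        funext i
        by_cases h : e i = i₀
        · rw [dif_pos h, Equiv.trans_apply, h,
            Equiv.Perm.ofSubtype_apply_of_not_mem τ (not_not_intro rfl)]
        · rw [dif_neg h, Equiv.trans_apply, Equiv.Perm.ofSubtype_apply_of_mem τ h]
      have hTfj : Tf j = ∑ τ : Equiv.Perm {i : ι // i ≠ i₀}, F (fun s => a' (τ s)) := by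
        simp only [hTf]
        rw [fiber_sum_eq i₀ j (fun σ => f (fun i => a (σ i)))]
        refine Finset.sum_congr rfl fun τ _ => ?_
        simp only [hF]
        exact congrArg f (hvec τ)
      have hTgj : Tg j = ∑ τ : Equiv.Perm {i : ι // i ≠ i₀}, G (fun s => a' (τ s)) := by
        simp only [hTg]
        rw [fiber_sum_eq i₀ j (fun σ => g (fun i => a (σ i)))]
        refine Finset.sum_congr rfl fun τ _ => ?_
        simp only [hG]
        exact congrArg g (hvec τ)
      have hTfgj : Tfg j = ∑ τ : Equiv.Perm {i : ι // i ≠ i₀},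
          F (fun s => a' (τ s)) * G (fun s => a' (τ s)) := by
        simp only [hTfg]
        rw [fiber_sum_eq i₀ j
          (fun σ => f (fun i => a (σ i)) * g (fun i => a (σ i)))]
        refine Finset.sum_congr rfl fun τ _ => ?_
        simp only [hF, hG]
        rw [congrArg f (hvec τ), congrArg g (hvec τ)]
      rw [hTfj, hTgj, hTfgj]
      exact h1
    -- monotonicity facts about the fiber sums
    have hjBnA : jB ∉ A := Finset.disjoint_right.mp hd hjB
    have hjAnB : jA ∉ B := Finset.disjoint_left.mp hd hjA
    set cf : ℝ := Tf jB with hcf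
    set cg : ℝ := Tg jA with hcg
    have hTf_ge : ∀ j, cf ≤ Tf j := fun j =>
      fiber_sum_le a i₀ hmax hf hfA j hjBnA
    have hTg_ge : ∀ j, cg ≤ Tg j := fun j =>
      fiber_sum_le a i₀ hmax hg hgB j hjAnB
    have hTf_eq : ∀ j, j ∉ A → Tf j = cf := fun j hj =>
      le_antisymm (fiber_sum_le a i₀ hmax hf hfA jB hj) (hTf_ge j)
    have hTg_eq : ∀ j, j ∉ B → Tg j = cg := fun j hj =>
      le_antisymm (fiber_sum_le a i₀ hmax hg hgB jA hj) (hTg_ge j)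
    set α : ι → ℝ := fun j => Tf j - cf with hα
    set β : ι → ℝ := fun j => Tg j - cg with hβ
    have hα0 : ∀ j, 0 ≤ α j := fun j => by simp [hα]; linarith [hTf_ge j]
    have hβ0 : ∀ j, 0 ≤ β j := fun j => by simp [hβ]; linarith [hTg_ge j]
    have hαβ : ∀ j, α j * β j = 0 := by
      intro j
      by_cases hj : j ∈ A
      · have : β j = 0 := by
          simp [hβ, hTg_eq j (Finset.disjoint_left.mp hd hj)]
        rw [this, mul_zero]
      · have : α j = 0 := by simp [hα, hTf_eq j hj]
        rw [this, zero_mul]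
    -- put the pieces together
    have hpart_f := perm_partition (ι := ι) i₀ (fun σ => f (fun i => a (σ i)))
    have hpart_g := perm_partition (ι := ι) i₀ (fun σ => g (fun i => a (σ i)))
    have hpart_fg := perm_partition (ι := ι) i₀
      (fun σ => f (fun i => a (σ i)) * g (fun i => a (σ i)))
    rw [hpart_f, hpart_g, hpart_fg, hNM]
    have hsum_f : ∑ j : ι, Tf j = nn * cf + ∑ j : ι, α j := by
      have : ∀ j : ι, Tf j = cf + α j := fun j => by simp [hα]
      rw [Finset.sum_congr rfl fun j _ => this j, Finset.sum_add_distrib,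
        Finset.sum_const, Finset.card_univ, nsmul_eq_mul]
    have hsum_g : ∑ j : ι, Tg j = nn * cg + ∑ j : ι, β j := by
      have : ∀ j : ι, Tg j = cg + β j := fun j => by simp [hβ]
      rw [Finset.sum_congr rfl fun j _ => this j, Finset.sum_add_distrib,
        Finset.sum_const, Finset.card_univ, nsmul_eq_mul]
    have hprod : ∑ j : ι, Tf j * Tg j
        = nn * (cf * cg) + cf * (∑ j : ι, β j) + cg * (∑ j : ι, α j) := by
      have : ∀ j : ι, Tf j * Tg j = cf * cg + cf * β j + cg * α j := by
        intro j
        have h := hαβ j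
        simp only [hα, hβ] at h ⊢
        nlinarith [h]
      rw [Finset.sum_congr rfl fun j _ => this j]
      rw [Finset.sum_add_distrib, Finset.sum_add_distrib, Finset.sum_const,
        Finset.card_univ, nsmul_eq_mul, ← Finset.mul_sum, ← Finset.mul_sum]
    have hSα : 0 ≤ ∑ j : ι, α j := Finset.sum_nonneg fun j _ => hα0 j
    have hSβ : 0 ≤ ∑ j : ι, β j := Finset.sum_nonneg fun j _ => hβ0 j
    have hstep : ∑ j : ι, M * Tfg j ≤ ∑ j : ι, Tf j * Tg j :=
      Finset.sum_le_sum fun j _ => hIH j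
    have hn0 : (0:ℝ) ≤ nn := by positivity
    calc nn * M * ∑ j : ι, Tfg j = nn * ∑ j : ι, M * Tfg j := by
          rw [Finset.mul_sum, Finset.mul_sum]
          exact Finset.sum_congr rfl fun j _ => by ring
      _ ≤ nn * ∑ j : ι, Tf j * Tg j := by
          exact mul_le_mul_of_nonneg_left hstep hn0
      _ = nn * (nn * (cf * cg) + cf * (∑ j : ι, β j) + cg * (∑ j : ι, α j)) := by rw [hprod]
      _ ≤ (nn * cf + ∑ j : ι, α j) * (nn * cg + ∑ j : ι, β j) := by
          nlinarith [mul_nonneg hSα hSβ]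
      _ = (∑ j : ι, Tf j) * ∑ j : ι, Tg j := by rw [hsum_f, hsum_g]

end Key

section Glue

open Finset

open Finset

variable {n : ℕ}

lemma measurable_perm {β : Type*} [MeasurableSpace β] (f : Equiv.Perm (Fin n) → β) :
    Measurable f := fun _ _ => trivial

instance : MeasurableSingletonClass (Equiv.Perm (Fin n)) := ⟨fun _ => trivial⟩

instance : IsProbabilityMeasure (permMeasure n) := by
  haveI : Nonempty (Equiv.Perm (Fin n)) := ⟨1⟩
  exact PMF.toMeasure.isProbabilityMeasure _

lemma permMeasure_apply (s : Set (Equiv.Perm (Fin n))) :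
    permMeasure n s = ∑ σ : Equiv.Perm (Fin n),
      s.indicator (fun _ => (Fintype.card (Equiv.Perm (Fin n)) : ℝ≥0∞)⁻¹) σ := by
  haveI : Nonempty (Equiv.Perm (Fin n)) := ⟨1⟩
  show (PMF.uniformOfFintype (Equiv.Perm (Fin n))).toMeasure s = _
  rw [PMF.toMeasure_apply_fintype]
  refine Finset.sum_congr rfl fun σ _ => ?_
  by_cases h : σ ∈ s <;> simp [Set.indicator_apply, h, PMF.uniformOfFintype_apply]

lemma permMeasure_singleton (σ : Equiv.Perm (Fin n)) :
    permMeasure n {σ} = (Fintype.card (Equiv.Perm (Fin n)) : ℝ≥0∞)⁻¹ := by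
  rw [permMeasure_apply]
  rw [Finset.sum_eq_single σ]
  · simp [Set.indicator_apply]
  · intro τ _ hτ
    simp [Set.indicator_apply, hτ]
  · intro h
    exact absurd (Finset.mem_univ σ) h

lemma map_permMeasure (b : Equiv.Perm (Fin n) ≃ Equiv.Perm (Fin n)) :
    Measure.map b (permMeasure n) = permMeasure n := by
  ext s hs
  rw [Measure.map_apply (measurable_perm b) hs, permMeasure_apply, permMeasure_apply,
    ← Equiv.sum_comp b
      (fun σ => s.indicator (fun _ => (Fintype.card (Equiv.Perm (Fin n)) : ℝ≥0∞)⁻¹) σ)]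
  refine Finset.sum_congr rfl fun σ _ => ?_
  by_cases h : b σ ∈ s <;>
    simp [Set.indicator_apply, Set.mem_preimage, h]

lemma Ua_apply (a : Fin n → ℝ) {s : Set (Fin n → ℝ)} (hs : MeasurableSet s) :
    Ua n a s = ∑ σ : Equiv.Perm (Fin n),
      s.indicator (fun _ => (Fintype.card (Equiv.Perm (Fin n)) : ℝ≥0∞)⁻¹)
        (fun i => a (σ i)) := by
  rw [Ua, Measure.map_apply (measurable_perm _) hs, permMeasure_apply]
  refine Finset.sum_congr rfl fun σ _ => ?_
  by_cases h : (fun i => a (σ i)) ∈ s <;>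
    simp [Set.indicator_apply, Set.mem_preimage, h]

lemma integral_permMeasure (φ : Equiv.Perm (Fin n) → ℝ) :
    ∫ σ, φ σ ∂(permMeasure n)
      = ∑ σ : Equiv.Perm (Fin n), ((Fintype.card (Equiv.Perm (Fin n)) : ℝ))⁻¹ * φ σ := by
  rw [integral_fintype (Integrable.of_finite)]
  refine Finset.sum_congr rfl fun σ _ => ?_
  rw [Measure.real, permMeasure_singleton]
  simp [smul_eq_mul]

lemma integral_Ua (a : Fin n → ℝ) (φ : (Fin n → ℝ) → ℝ)
    (hφ : AEStronglyMeasurable φ (Ua n a)) :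
    ∫ x, φ x ∂(Ua n a)
      = ∑ σ : Equiv.Perm (Fin n),
          ((Fintype.card (Equiv.Perm (Fin n)) : ℝ))⁻¹ * φ (fun i => a (σ i)) := by
  rw [Ua] at hφ ⊢
  rw [integral_map (measurable_perm _).aemeasurable hφ]
  exact integral_permMeasure _

lemma na_Ua (a : Fin n → ℝ) : NAMeasure (Ua n a) := by
  intro A B hd f g hfm hgm hf hg hfA hgB _ _
  have key := key_ineq (Fintype.card (Fin n)) (Fin n) le_rfl a A B hd f g hf hg hfA hgB
  rw [integral_Ua a (fun x => f x * g x) ((hfm.mul hgm).aestronglyMeasurable),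
      integral_Ua a f hfm.aestronglyMeasurable, integral_Ua a g hgm.aestronglyMeasurable]
  haveI : Nonempty (Equiv.Perm (Fin n)) := ⟨1⟩
  set N : ℝ := (Fintype.card (Equiv.Perm (Fin n)) : ℝ) with hN
  have hN0 : 0 < N := by
    rw [hN]; exact_mod_cast Fintype.card_pos
  rw [← Finset.mul_sum, ← Finset.mul_sum, ← Finset.mul_sum]
  set Sfg : ℝ := ∑ σ : Equiv.Perm (Fin n), f (fun i => a (σ i)) * g (fun i => a (σ i)) with hSfg
  set Sf : ℝ := ∑ σ : Equiv.Perm (Fin n), f (fun i => a (σ i)) with hSf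
  set Sg : ℝ := ∑ σ : Equiv.Perm (Fin n), g (fun i => a (σ i)) with hSg
  have key2 : N * Sfg ≤ Sf * Sg := key
  have h2 : N⁻¹ * N⁻¹ * (N * Sfg) ≤ N⁻¹ * N⁻¹ * (Sf * Sg) :=
    mul_le_mul_of_nonneg_left key2 (by positivity)
  have h3 : N⁻¹ * N = 1 := inv_mul_cancel₀ hN0.ne'
  have h4 : N⁻¹ * N⁻¹ * (N * Sfg) = N⁻¹ * Sfg := by
    rw [show N⁻¹ * N⁻¹ * (N * Sfg) = (N⁻¹ * N) * (N⁻¹ * Sfg) by ring, h3, one_mul]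
  have h5 : (N⁻¹ * Sf) * (N⁻¹ * Sg) = N⁻¹ * N⁻¹ * (Sf * Sg) := by ring
  rw [h4] at h2
  linarith [h2, h5]

lemma exch_Ua (a : Fin n → ℝ) (π : Equiv.Perm (Fin n)) :
    Measure.map (fun x (i : Fin n) => x (π i)) (Ua n a) = Ua n a := by
  have hcoords : Measurable fun x : Fin n → ℝ => fun i => x (π i) :=
    measurable_pi_lambda _ fun i => measurable_pi_apply (π i)
  rw [Ua, Measure.map_map hcoords (measurable_perm _)]
  have hcomp : ((fun x (i : Fin n) => x (π i)) ∘ (fun σ : Equiv.Perm (Fin n) => fun i => a (σ i)))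
      = (fun σ : Equiv.Perm (Fin n) => fun i => a (σ i)) ∘ (Equiv.mulRight π) := by
    funext σ
    funext i
    simp [Equiv.Perm.mul_apply]
  rw [hcomp, ← Measure.map_map (measurable_perm _) (measurable_perm _), map_permMeasure]

lemma measurableSet_sumSet (μc : ℝ) : MeasurableSet {x : Fin n → ℝ | ∑ i, x i = μc} := by
  have h : Measurable fun x : Fin n → ℝ => ∑ i, x i :=
    Finset.univ.measurable_sum fun i _ => measurable_pi_apply i
  exact h (measurableSet_singleton μc)

lemma Ua_sumSet (a : Fin n → ℝ) (μc : ℝ) (ha : ∑ i, a i = μc) :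
    Ua n a {x | ∑ i, x i = μc} = 1 := by
  rw [Ua, Measure.map_apply (measurable_perm _) (measurableSet_sumSet μc)]
  have : (fun σ : Equiv.Perm (Fin n) => fun i => a (σ i)) ⁻¹' {x | ∑ i, x i = μc}
      = Set.univ := by
    ext σ
    simp [Set.mem_preimage, Equiv.sum_comp σ a, ha]
  rw [this]
  exact measure_univ

end Glue

/-- The law of an exchangeable joint mix with center `μc` is a mixture of the laws `U_a`,
`∑ a_i = μc`, each of which is the law of an exchangeable NA joint mix with center `μc`. -/
theorem stmt7 {Ω : Type*} [MeasurableSpace Ω] (P : Measure Ω) [IsProbabilityMeasure P]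
    {n : ℕ} (X : Fin n → Ω → ℝ) (hmeas : ∀ i, Measurable (X i)) (μc : ℝ)
    (hJM : ∀ᵐ ω ∂P, ∑ i, X i ω = μc)
    (hexch : ∀ π : Equiv.Perm (Fin n),
      Measure.map (fun ω i => X (π i) ω) P = Measure.map (fun ω i => X i ω) P) :
    (∃ G : Measure (Fin n → ℝ), IsProbabilityMeasure G ∧
      G {a | ∑ i, a i = μc} = 1 ∧
      Measure.map (fun ω i => X i ω) P = G.bind (fun a => Ua n a)) ∧
    (∀ a : Fin n → ℝ, ∑ i, a i = μc →
      (Ua n a) {x | ∑ i, x i = μc} = 1 ∧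
      (∀ π : Equiv.Perm (Fin n), Measure.map (fun x i => x (π i)) (Ua n a) = Ua n a) ∧
      NAMeasure (Ua n a)) := by
  constructor
  · -- the mixture representation
    have hXX : Measurable (fun ω i => X i ω) := measurable_pi_lambda _ hmeas
    set G : Measure (Fin n → ℝ) := Measure.map (fun ω i => X i ω) P with hG
    haveI : Nonempty (Equiv.Perm (Fin n)) := ⟨1⟩
    set c : ℝ≥0∞ := (Fintype.card (Equiv.Perm (Fin n)) : ℝ≥0∞)⁻¹ with hc
    refine ⟨G, Measure.isProbabilityMeasure_map hXX.aemeasurable, ?_, ?_⟩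
    · rw [hG, Measure.map_apply hXX (measurableSet_sumSet μc)]
      have h1 : P ((fun ω i => X i ω) ⁻¹' {a | ∑ i, a i = μc}) = P Set.univ := by
        apply measure_congr
        filter_upwards [hJM] with ω hω
        exact eq_true hω
      rw [h1, measure_univ]
    · -- G = G.bind Ua
      have hmσ : ∀ σ : Equiv.Perm (Fin n),
          Measurable (fun x : Fin n → ℝ => (fun i => x (σ i) : Fin n → ℝ)) := fun σ =>
        measurable_pi_lambda _ fun i => measurable_pi_apply (σ i)
      have hrepr : ∀ {s : Set (Fin n → ℝ)}, MeasurableSet s →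
          (fun a : Fin n → ℝ => Ua n a s)
            = fun a => ∑ σ : Equiv.Perm (Fin n),
                ((fun x : Fin n → ℝ => (fun i => x (σ i) : Fin n → ℝ)) ⁻¹' s).indicator
                  (fun _ => c) a := by
        intro s hs
        funext a
        rw [Ua_apply a hs]
        refine Finset.sum_congr rfl fun σ _ => ?_
        by_cases h : (fun i => a (σ i)) ∈ s <;>
          simp [Set.indicator_apply, Set.mem_preimage, h, hc]
      have hUa_meas : Measurable (fun a : Fin n → ℝ => Ua n a) := by
        apply Measure.measurable_of_measurable_coe
        intro s hs
        rw [hrepr hs]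
        exact Finset.measurable_sum _ fun σ _ =>
          Measurable.indicator measurable_const ((hmσ σ) hs)
      refine Measure.ext fun s hs => ?_
      rw [Measure.bind_apply hs hUa_meas.aemeasurable]
      have h2 : ∀ σ : Equiv.Perm (Fin n), G ((fun x : Fin n → ℝ =>
          (fun i => x (σ i) : Fin n → ℝ)) ⁻¹' s) = G s := by
        intro σ
        have h3 : Measure.map (fun x : Fin n → ℝ => (fun i => x (σ i) : Fin n → ℝ)) G = G := by
          rw [hG, Measure.map_map (hmσ σ) hXX]
          exact hexch σ
        conv_rhs => rw [← h3]
        rw [Measure.map_apply (hmσ σ) hs]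
      calc (Measure.map (fun ω i => X i ω) P) s = G s := by rw [hG]
        _ = (Fintype.card (Equiv.Perm (Fin n)) : ℝ≥0∞) * (c * G s) := by
            rw [hc, ← mul_assoc, ENNReal.mul_inv_cancel
              (Nat.cast_ne_zero.mpr Fintype.card_ne_zero) (ENNReal.natCast_ne_top _), one_mul]
        _ = ∑ _σ : Equiv.Perm (Fin n), c * G s := by
            rw [Finset.sum_const, Finset.card_univ, nsmul_eq_mul]
        _ = ∑ σ : Equiv.Perm (Fin n), ∫⁻ a, ((fun x : Fin n → ℝ =>
              (fun i => x (σ i) : Fin n → ℝ)) ⁻¹' s).indicator (fun _ => c) a ∂G := by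
            refine Finset.sum_congr rfl fun σ _ => ?_
            rw [lintegral_indicator_const ((hmσ σ) hs), h2 σ]
        _ = ∫⁻ a, ∑ σ : Equiv.Perm (Fin n), ((fun x : Fin n → ℝ =>
              (fun i => x (σ i) : Fin n → ℝ)) ⁻¹' s).indicator (fun _ => c) a ∂G := by
            rw [lintegral_finset_sum _ fun σ _ =>
              Measurable.indicator measurable_const ((hmσ σ) hs)]
        _ = ∫⁻ a, Ua n a s ∂G := by rw [← hrepr hs]
  · intro a ha
    exact ⟨Ua_sumSet a μc ha, fun π => exch_Ua a π, na_Ua a⟩
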